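/- For every positive integer n, the number of solutions (a,b,u₁,u₂,u₃,v₁,v₂,v₃) in ℤ/nℤ of ab − (u₁v₁ + u₂v₂ + u₃v₃) = 1 equals n⁷·∏_{p | n} (1 − p⁻⁴), the product over primes p dividing n. -/

import Mathlib

/-- Zorn vector matrices `[[a, x],[y, b]]` with `a b : R` and `x y : R³`. -/
structure Zorn (R : Type*) where
  a : R
  x : Fin 3 → R
  y : Fin 3 → R
  b : R

namespace Zorn

variable {R : Type*} [CommRing R]

/-- Dot product on `R³`. -/
def dot (u v : Fin 3 → R) : R := u 0 * v 0 + u 1 * v 1 + u 2 * v 2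

/-- Cross product on `R³`. -/
def cross (u v : Fin 3 → R) : Fin 3 → R :=
  ![u 1 * v 2 - u 2 * v 1, u 2 * v 0 - u 0 * v 2, u 0 * v 1 - u 1 * v 0]

/-- The Zorn vector matrix product. -/
def mul (A B : Zorn R) : Zorn R where
  a := A.a * B.a + dot A.x B.y
  x := fun i => A.a * B.x i + B.b * A.x i - cross A.y B.y i
  y := fun i => B.a * A.y i + A.b * B.y i + cross A.x B.x i
  b := A.b * B.b + dot A.y B.x

/-- The determinant of a Zorn vector matrix. -/
def det (A : Zorn R) : R := A.a * A.b - dot A.x A.y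

/-- The identity Zorn vector matrix. -/
def one : Zorn R := ⟨1, 0, 0, 1⟩

end Zorn

open scoped BigOperators

open Finset

section Helpers

variable {R S : Type*} [CommRing R] [CommRing S]

/-- Solutions of `x · y = 1` with `x, y ∈ R⁴`. -/
def sol (R : Type*) [CommRing R] : Type _ :=
  {p : (Fin 4 → R) × (Fin 4 → R) // ∑ i, p.1 i * p.2 i = 1}

def solCongr (e : R ≃+* S) : sol R ≃ sol S where
  toFun p := ⟨(fun i => e (p.1.1 i), fun i => e (p.1.2 i)), by
    show ∑ i, e (p.1.1 i) * e (p.1.2 i) = 1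
    simp only [← map_mul]
    rw [← map_sum, p.2, map_one]⟩
  invFun q := ⟨(fun i => e.symm (q.1.1 i), fun i => e.symm (q.1.2 i)), by
    show ∑ i, e.symm (q.1.1 i) * e.symm (q.1.2 i) = 1
    simp only [← map_mul]
    rw [← map_sum, q.2, map_one]⟩
  left_inv p := by apply Subtype.ext; simp
  right_inv q := by apply Subtype.ext; simp

def solProd : sol (R × S) ≃ sol R × sol S where
  toFun p :=
    (⟨(fun i => (p.1.1 i).1, fun i => (p.1.2 i).1), by
        have := congrArg Prod.fst p.2
        simpa [Prod.fst_sum] using this⟩,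
     ⟨(fun i => (p.1.1 i).2, fun i => (p.1.2 i).2), by
        have := congrArg Prod.snd p.2
        simpa [Prod.snd_sum] using this⟩)
  invFun q :=
    ⟨(fun i => (q.1.1.1 i, q.2.1.1 i), fun i => (q.1.1.2 i, q.2.1.2 i)), by
      have h1 := q.1.2
      have h2 := q.2.2
      refine Prod.ext ?_ ?_ <;> simpa⟩
  left_inv p := by apply Subtype.ext; simp
  right_inv q := by
    refine Prod.ext ?_ ?_ <;> apply Subtype.ext <;> simp

end Helpers

section Counting

/-- Fibers of a surjective hom between finite abelian groups. -/
lemma card_fiber_mul {G H : Type*} [AddCommGroup G] [AddCommGroup H] [Finite G] [Finite H]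
    (f : G →+ H) (hf : Function.Surjective f) (c : H) :
    Nat.card {g // f g = c} * Nat.card H = Nat.card G := by
  obtain ⟨g₀, hg₀⟩ := hf c
  have e : {g // f g = c} ≃ f.ker :=
    { toFun := fun g => ⟨g.1 - g₀, by
        rw [AddMonoidHom.mem_ker, map_sub, g.2, hg₀, sub_self]⟩
      invFun := fun k => ⟨k.1 + g₀, by
        have hk := k.2
        rw [AddMonoidHom.mem_ker] at hk
        rw [map_add, hk, hg₀, zero_add]⟩
      left_inv := fun g => by apply Subtype.ext; simp
      right_inv := fun k => by apply Subtype.ext; simp }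
  rw [Nat.card_congr e,
    ← Nat.card_congr (QuotientAddGroup.quotientKerEquivOfSurjective f hf).toEquiv, mul_comm]
  exact (AddSubgroup.card_eq_card_quotient_mul_card_addSubgroup f.ker).symm

variable (m : ℕ) [NeZero m]

/-- The dot-product-with-`x` additive hom. -/
def dotHom (x : Fin 4 → ZMod m) : (Fin 4 → ZMod m) →+ ZMod m where
  toFun y := ∑ i, x i * y i
  map_zero' := by simp
  map_add' y z := by
    show ∑ i, x i * (y i + z i) = (∑ i, x i * y i) + ∑ i, x i * z i
    rw [← Finset.sum_add_distrib]
    exact Finset.sum_congr rfl fun i _ => mul_add _ _ _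

lemma card_fiber_of_good (x : Fin 4 → ZMod m) (h : ∃ y : Fin 4 → ZMod m, ∑ i, x i * y i = 1) :
    Nat.card {y : Fin 4 → ZMod m // ∑ i, x i * y i = 1} = m ^ 3 := by
  obtain ⟨y₀, hy₀⟩ := h
  have hs : Function.Surjective (dotHom m x) := by
    intro c
    refine ⟨fun i => c * y₀ i, ?_⟩
    show ∑ i, x i * (c * y₀ i) = c
    calc ∑ i, x i * (c * y₀ i) = c * ∑ i, x i * y₀ i := by
          rw [Finset.mul_sum]; exact Finset.sum_congr rfl fun i _ => by ring
      _ = c := by rw [hy₀, mul_one]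
  have key := card_fiber_mul (dotHom m x) hs 1
  have : Nat.card {y // dotHom m x y = 1} = Nat.card {y : Fin 4 → ZMod m // ∑ i, x i * y i = 1} := rfl
  rw [this, Nat.card_zmod, Nat.card_pi] at key
  simp only [Nat.card_zmod, Finset.prod_const, Finset.card_univ, Fintype.card_fin] at key
  have hm : 0 < m := NeZero.pos m
  have h4 : m ^ 4 = m ^ 3 * m := by ring
  rw [h4] at key
  exact Nat.eq_of_mul_eq_mul_right hm key

lemma card_sol_eq :
    Nat.card (sol (ZMod m)) =
      Nat.card {x : Fin 4 → ZMod m // ∃ y : Fin 4 → ZMod m, ∑ i, x i * y i = 1} * m ^ 3 := by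
  classical
  have e : sol (ZMod m) ≃ Σ x : Fin 4 → ZMod m, {y : Fin 4 → ZMod m // ∑ i, x i * y i = 1} :=
    Equiv.subtypeProdEquivSigmaSubtype (fun x y : Fin 4 → ZMod m => ∑ i, x i * y i = 1)
  rw [Nat.card_congr e, Nat.card_eq_fintype_card, Fintype.card_sigma]
  have step : ∀ x : Fin 4 → ZMod m,
      Fintype.card {y : Fin 4 → ZMod m // ∑ i, x i * y i = 1} =
        if (∃ y : Fin 4 → ZMod m, ∑ i, x i * y i = 1) then m ^ 3 else 0 := by
    intro x
    split_ifs with h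
    · rw [← Nat.card_eq_fintype_card]; exact card_fiber_of_good m x h
    · rw [Fintype.card_eq_zero_iff]
      exact ⟨fun y => h ⟨y.1, y.2⟩⟩
  rw [Finset.sum_congr rfl fun x _ => step x, Finset.sum_ite, Finset.sum_const,
    Finset.sum_const, smul_eq_mul, smul_eq_mul, mul_zero, add_zero, Nat.card_eq_fintype_card,
    Fintype.card_subtype]

end Counting

section PrimePower

variable (p k : ℕ)

lemma good_iff (hp : p.Prime) (hk : 0 < k) (x : Fin 4 → ZMod (p ^ k)) :
    (∃ y : Fin 4 → ZMod (p ^ k), ∑ i, x i * y i = 1) ↔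
      ∃ i, ZMod.castHom (dvd_pow_self p hk.ne') (ZMod p) (x i) ≠ 0 := by
  haveI := Fact.mk hp
  set π := ZMod.castHom (dvd_pow_self p hk.ne') (ZMod p) with hπ
  constructor
  · rintro ⟨y, hy⟩
    by_contra hall
    push_neg at hall
    have h1 : π (∑ i, x i * y i) = 1 := by rw [hy, map_one]
    rw [map_sum] at h1
    simp only [map_mul, hall, zero_mul, Finset.sum_const_zero] at h1
    exact zero_ne_one h1
  · rintro ⟨i₀, h0⟩
    obtain ⟨a, ha⟩ := ZMod.natCast_zmod_surjective (x i₀)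
    have hpa : ¬ p ∣ a := by
      rw [← ZMod.natCast_eq_zero_iff a p]
      intro h
      apply h0
      rw [← ha, map_natCast, h]
    have hcop : a.Coprime (p ^ k) :=
      Nat.Coprime.pow_right _ (Nat.coprime_comm.mp ((Nat.Prime.coprime_iff_not_dvd hp).mpr hpa))
    have hu : IsUnit (x i₀) := by
      rw [← ha]
      exact (ZMod.isUnit_iff_coprime a (p ^ k)).mpr hcop
    obtain ⟨u, hu⟩ := hu
    refine ⟨fun j => if j = i₀ then ↑u⁻¹ else 0, ?_⟩
    rw [Finset.sum_eq_single i₀]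
    · dsimp only
      rw [if_pos rfl, ← hu]
      exact u.mul_inv
    · intro j _ hj
      dsimp only
      rw [if_neg hj, mul_zero]
    · intro h
      exact absurd (Finset.mem_univ i₀) h

lemma card_kerpi (hp : p.Prime) (hk : 0 < k) :
    Nat.card {z : ZMod (p ^ k) // ZMod.castHom (dvd_pow_self p hk.ne') (ZMod p) z = 0} =
      p ^ (k - 1) := by
  haveI : NeZero (p ^ k) := ⟨pow_ne_zero _ hp.pos.ne'⟩
  haveI : NeZero p := ⟨hp.pos.ne'⟩
  set π := ZMod.castHom (dvd_pow_self p hk.ne') (ZMod p) with hπ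
  have hs : Function.Surjective π.toAddMonoidHom := by
    intro z
    obtain ⟨a, rfl⟩ := ZMod.natCast_zmod_surjective z
    exact ⟨(a : ZMod (p ^ k)), map_natCast π a⟩
  have key := card_fiber_mul π.toAddMonoidHom hs 0
  rw [Nat.card_zmod, Nat.card_zmod] at key
  have hcast : Nat.card {z // π.toAddMonoidHom z = 0} =
      Nat.card {z : ZMod (p ^ k) // π z = 0} := rfl
  rw [hcast] at key
  have hpk : p ^ k = p ^ (k - 1) * p := by
    rw [← pow_succ]
    congr 1
    omega
  exact Nat.eq_of_mul_eq_mul_right hp.pos (key.trans hpk)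

lemma card_good_pow (hp : p.Prime) (hk : 0 < k) :
    Nat.card {x : Fin 4 → ZMod (p ^ k) // ∃ y : Fin 4 → ZMod (p ^ k), ∑ i, x i * y i = 1} =
      p ^ (4 * k) - p ^ (4 * (k - 1)) := by
  classical
  haveI : NeZero (p ^ k) := ⟨pow_ne_zero _ hp.pos.ne'⟩
  set π := ZMod.castHom (dvd_pow_self p hk.ne') (ZMod p) with hπ
  -- the complement set
  have ebad : {x : Fin 4 → ZMod (p ^ k) // ¬ ∃ y : Fin 4 → ZMod (p ^ k), ∑ i, x i * y i = 1} ≃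
      (Fin 4 → {z : ZMod (p ^ k) // π z = 0}) := by
    refine (Equiv.subtypeEquivRight ?_).trans (Equiv.subtypePiEquivPi (p := fun _ z => π z = 0))
    intro x
    rw [good_iff p k hp hk x]
    push_neg
    rfl
  have hbad : Nat.card {x : Fin 4 → ZMod (p ^ k) //
      ¬ ∃ y : Fin 4 → ZMod (p ^ k), ∑ i, x i * y i = 1} = p ^ (4 * (k - 1)) := by
    rw [Nat.card_congr ebad, Nat.card_pi]
    simp only [card_kerpi p k hp hk, Finset.prod_const, Finset.card_univ, Fintype.card_fin]
    rw [hπ, card_kerpi p k hp hk, ← pow_mul, mul_comm]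
  have htot : Fintype.card (Fin 4 → ZMod (p ^ k)) = p ^ (4 * k) := by
    rw [Fintype.card_fun, ZMod.card, Fintype.card_fin, ← pow_mul, mul_comm]
  have hcompl := Fintype.card_subtype_compl
    (fun x : Fin 4 → ZMod (p ^ k) => ∃ y : Fin 4 → ZMod (p ^ k), ∑ i, x i * y i = 1)
  rw [htot] at hcompl
  rw [Nat.card_eq_fintype_card] at hbad ⊢
  have hle : Fintype.card {x : Fin 4 → ZMod (p ^ k) //
      ∃ y : Fin 4 → ZMod (p ^ k), ∑ i, x i * y i = 1} ≤ p ^ (4 * k) := by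
    rw [← htot]
    exact Fintype.card_subtype_le _
  clear ebad hπ
  generalize hA : Fintype.card {x : Fin 4 → ZMod (p ^ k) //
      ∃ y : Fin 4 → ZMod (p ^ k), ∑ i, x i * y i = 1} = A at *
  generalize hB : Fintype.card {x : Fin 4 → ZMod (p ^ k) //
      ¬ ∃ y : Fin 4 → ZMod (p ^ k), ∑ i, x i * y i = 1} = B at *
  clear hA hB
  omega

lemma card_sol_pow (hp : p.Prime) (hk : 0 < k) :
    Nat.card (sol (ZMod (p ^ k))) = (p ^ (4 * k) - p ^ (4 * (k - 1))) * (p ^ k) ^ 3 := by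
  haveI : NeZero (p ^ k) := ⟨pow_ne_zero _ hp.pos.ne'⟩
  rw [card_sol_eq, card_good_pow p k hp hk, pow_mul]

end PrimePower

lemma card_sol_mul (a b : ℕ) (h : Nat.Coprime a b) :
    Nat.card (sol (ZMod (a * b))) = Nat.card (sol (ZMod a)) * Nat.card (sol (ZMod b)) := by
  rw [Nat.card_congr ((solCongr (ZMod.chineseRemainder h)).trans solProd)]
  exact Nat.card_prod _ _

lemma key_formula : ∀ n : ℕ, 0 < n →
    (Nat.card (sol (ZMod n)) : ℚ) =
      (n : ℚ) ^ 7 * ∏ p ∈ n.primeFactors, (1 - ((p : ℚ)⁻¹) ^ 4) := by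
  intro n
  induction n using Nat.recOnPosPrimePosCoprime with
  | prime_pow p k hpp hk =>
    intro _
    obtain ⟨j, rfl⟩ : ∃ j, k = j + 1 := ⟨k - 1, by omega⟩
    rw [card_sol_pow p (j + 1) hpp hk, Nat.primeFactors_prime_pow (by omega) hpp,
      Finset.prod_singleton]
    have hple : p ^ (4 * j) ≤ p ^ (4 * (j + 1)) :=
      Nat.pow_le_pow_right hpp.pos (by omega)
    have hj : 4 * (j + 1 - 1) = 4 * j := rfl
    rw [hj]
    push_cast [Nat.cast_sub hple]
    have hp0 : (p : ℚ) ≠ 0 := Nat.cast_ne_zero.mpr hpp.pos.ne'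
    field_simp
    ring
  | zero => intro h; exact absurd h (lt_irrefl 0)
  | one =>
    intro _
    have h1 : Nat.card (sol (ZMod 1)) = 1 := by
      rw [Nat.card_eq_one_iff_unique]
      constructor
      · constructor
        intro x y
        apply Subtype.ext
        apply Subsingleton.elim
      · exact ⟨⟨(fun _ => 1, fun _ => 1), Subsingleton.elim _ _⟩⟩
    rw [h1]
    simp
  | coprime a b ha hb hab iha ihb =>
    intro _
    rw [card_sol_mul a b hab, Nat.cast_mul, iha (by omega), ihb (by omega),
      hab.primeFactors_mul, Finset.prod_union (Nat.Coprime.disjoint_primeFactors hab)]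
    push_cast
    ring



/-- for `n ≥ 1`, the number of Zorn matrices of determinant 1
over `ℤ/nℤ` is `n⁷·∏_{p ∣ n} (1 − p⁻⁴)`. -/
def zornEquivSol {R : Type*} [CommRing R] : {A : Zorn R // A.det = 1} ≃ sol R where
  toFun A := ⟨(![A.1.a, A.1.x 0, A.1.x 1, A.1.x 2], ![A.1.b, -A.1.y 0, -A.1.y 1, -A.1.y 2]), by
    have h := A.2
    rw [Zorn.det, Zorn.dot] at h
    show ∑ i : Fin 4, ![A.1.a, A.1.x 0, A.1.x 1, A.1.x 2] i *
      ![A.1.b, -A.1.y 0, -A.1.y 1, -A.1.y 2] i = 1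
    rw [Fin.sum_univ_four]
    simp only [Matrix.cons_val_zero, Matrix.cons_val_one, Matrix.head_cons, Matrix.cons_val_two,
      Matrix.tail_cons, Matrix.cons_val_three]
    linear_combination h⟩
  invFun p := ⟨⟨p.1.1 0, ![p.1.1 1, p.1.1 2, p.1.1 3], ![-p.1.2 1, -p.1.2 2, -p.1.2 3], p.1.2 0⟩, by
    have h := p.2
    rw [Fin.sum_univ_four] at h
    rw [Zorn.det, Zorn.dot]
    simp only [Matrix.cons_val_zero, Matrix.cons_val_one, Matrix.head_cons, Matrix.cons_val_two,
      Matrix.tail_cons]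
    linear_combination h⟩
  left_inv := by
    rintro ⟨⟨a, x, y, b⟩, h⟩
    apply Subtype.ext
    simp only [Zorn.mk.injEq]
    refine ⟨rfl, ?_, ?_, rfl⟩ <;> funext i <;> fin_cases i <;> simp
  right_inv := by
    rintro ⟨⟨x, y⟩, h⟩
    apply Subtype.ext
    simp only [Prod.mk.injEq]
    constructor <;> funext i <;> fin_cases i <;> simp


theorem card_SLL_zmod (n : ℕ) (hn : 0 < n) :
    (Nat.card {A : Zorn (ZMod n) // A.det = 1} : ℚ) =
      (n : ℚ) ^ 7 * ∏ p ∈ n.primeFactors, (1 - ((p : ℚ)⁻¹) ^ 4) := by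
  rw [Nat.card_congr zornEquivSol]
  exact key_formula n hn
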